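/- In a strongly unital category, let k : X → A and l : Y → A be monomorphisms that Huq-commute with cooperator φ : X × Y → A. If ⟨u, v⟩ : W → X × Y is the kernel of φ, then k∘u = l∘(-v), where -v denotes the composite of v with the inverse for the natural subtraction; moreover u and v are central monomorphisms. -/

import Mathlib

open CategoryTheory CategoryTheory.Limits

universe v u

noncomputable section

variable {C : Type u} [Category.{v} C]

/-- A pair of morphisms with common codomain is jointly strongly epimorphic:
it has the lifting property against all monomorphisms. -/
def JointlyStrongEpi {X Y Z : C} (f : X ⟶ Z) (g : Y ⟶ Z) : Prop :=
  ∀ {U V : C} (m : U ⟶ V) (_ : Mono m) (h : Z ⟶ V) (u : X ⟶ U) (v : Y ⟶ U),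
    u ≫ m = f ≫ h → v ≫ m = g ≫ h → ∃ t : Z ⟶ U, t ≫ m = h

variable (C) in
/-- A unital category: pointed, finitely complete, and the product inclusions
`⟨1,0⟩ : X → X × Y` and `⟨0,1⟩ : Y → X × Y` are jointly strongly epimorphic. -/
class Unital [HasZeroObject C] [HasZeroMorphisms C] [HasFiniteLimits C] : Prop where
  jse : ∀ X Y : C, JointlyStrongEpi (prod.lift (𝟙 X) (0 : X ⟶ Y)) (prod.lift (0 : Y ⟶ X) (𝟙 Y))

/-- `f : X ⟶ A` and `g : Y ⟶ A` Huq-commute: there is a cooperator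
`φ : X × Y ⟶ A` with `φ∘⟨1,0⟩ = f` and `φ∘⟨0,1⟩ = g`. -/
def HuqCommute [HasZeroMorphisms C] [HasFiniteLimits C] {X Y A : C} (f : X ⟶ A) (g : Y ⟶ A) : Prop :=
  ∃ φ : X ⨯ Y ⟶ A, prod.lift (𝟙 X) 0 ≫ φ = f ∧ prod.lift 0 (𝟙 Y) ≫ φ = g

variable (C) in
/-- A strongly unital category: pointed, finitely complete, and for every object `X` the
morphisms `⟨1,0⟩ : X → X × X` and the diagonal `⟨1,1⟩ : X → X × X` are jointly strongly
epimorphic. -/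
class StronglyUnital [HasZeroObject C] [HasZeroMorphisms C] [HasFiniteLimits C] : Prop where
  jse : ∀ X Y : C, JointlyStrongEpi (prod.lift (𝟙 X) (0 : X ⟶ Y)) (prod.lift (0 : Y ⟶ X) (𝟙 Y))
  jse' : ∀ X : C, JointlyStrongEpi (prod.lift (𝟙 X) (0 : X ⟶ X)) (prod.lift (𝟙 X) (𝟙 X))

/-- A jointly strongly epimorphic pair is jointly epimorphic. -/
theorem JointlyStrongEpi.jointEpi [HasFiniteLimits C] {X Y Z : C} {f : X ⟶ Z} {g : Y ⟶ Z}
    (h : JointlyStrongEpi f g) {V : C} (h₁ h₂ : Z ⟶ V)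
    (hf : f ≫ h₁ = f ≫ h₂) (hg : g ≫ h₁ = g ≫ h₂) : h₁ = h₂ := by
  obtain ⟨t, ht⟩ := h (equalizer.ι h₁ h₂) inferInstance (𝟙 Z)
      (equalizer.lift f hf) (equalizer.lift g hg)
      (by simp) (by simp)
  calc h₁ = t ≫ equalizer.ι h₁ h₂ ≫ h₁ := by rw [← Category.assoc, ht, Category.id_comp]
    _ = t ≫ equalizer.ι h₁ h₂ ≫ h₂ := by rw [equalizer.condition]
    _ = h₂ := by rw [← Category.assoc, ht, Category.id_comp]

@[simp] theorem prod_lift_fst_fl [HasFiniteLimits C] {T X Y : C} (f : T ⟶ X) (g : T ⟶ Y) :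
    prod.lift f g ≫ prod.fst = f := prod.lift_fst f g

@[simp] theorem prod_lift_snd_fl [HasFiniteLimits C] {T X Y : C} (f : T ⟶ X) (g : T ⟶ Y) :
    prod.lift f g ≫ prod.snd = g := prod.lift_snd f g

@[simp] theorem prod_lift_fst_fl_assoc [HasFiniteLimits C] {T X Y Z : C} (f : T ⟶ X) (g : T ⟶ Y)
    (h : X ⟶ Z) : prod.lift f g ≫ prod.fst ≫ h = f ≫ h := prod.lift_fst_assoc f g h

@[simp] theorem prod_lift_snd_fl_assoc [HasFiniteLimits C] {T X Y Z : C} (f : T ⟶ X) (g : T ⟶ Y)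
    (h : Y ⟶ Z) : prod.lift f g ≫ prod.snd ≫ h = g ≫ h := prod.lift_snd_assoc f g h

/-- In a strongly unital category (with its natural subtraction `s`), if `k, l` are
monomorphisms that Huq-commute with cooperator `φ`, and `⟨u,v⟩ : W → X × Y` is the kernel
of `φ`, then `u` and `v` are central monomorphisms and `k∘u = l∘(-v)`. -/
theorem stmt12 [HasZeroObject C] [HasZeroMorphisms C] [HasFiniteLimits C] [StronglyUnital C]
    -- the natural subtraction of the strongly unital category
    (s : ∀ X : C, X ⨯ X ⟶ X)
    (hs1 : ∀ X : C, prod.lift (𝟙 X) 0 ≫ s X = 𝟙 X)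
    (hs2 : ∀ X : C, prod.lift (𝟙 X) (𝟙 X) ≫ s X = 0)
    (hsnat : ∀ {X Y : C} (f : X ⟶ Y), prod.map f f ≫ s Y = s X ≫ f)
    {X Y A W : C} (k : X ⟶ A) (l : Y ⟶ A) (hk : Mono k) (hl : Mono l)
    (φ : X ⨯ Y ⟶ A) (hφ1 : prod.lift (𝟙 X) 0 ≫ φ = k) (hφ2 : prod.lift 0 (𝟙 Y) ≫ φ = l)
    (w : W ⟶ X ⨯ Y) (hw0 : w ≫ φ = 0) (hw : IsLimit (KernelFork.ofι w hw0)) :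
    Mono (w ≫ prod.fst) ∧ Mono (w ≫ prod.snd) ∧
      HuqCommute (w ≫ prod.fst) (𝟙 X) ∧ HuqCommute (w ≫ prod.snd) (𝟙 Y) ∧
      (w ≫ prod.fst) ≫ k = (prod.lift 0 (w ≫ prod.snd) ≫ s Y) ≫ l := by
  have js1 : JointlyStrongEpi (prod.lift (𝟙 X) (0 : X ⟶ Y)) (prod.lift (0 : Y ⟶ X) (𝟙 Y)) :=
    StronglyUnital.jse X Y
  have js2 : ∀ Z : C, JointlyStrongEpi (prod.lift (𝟙 Z) (0 : Z ⟶ Z)) (prod.lift (𝟙 Z) (𝟙 Z)) :=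
    StronglyUnital.jse'
  -- generic subtraction facts
  have sub_zero : ∀ {T Z : C} (x : T ⟶ Z), prod.lift x 0 ≫ s Z = x := by
    intro T Z x
    rw [show prod.lift x (0 : T ⟶ Z) = x ≫ prod.lift (𝟙 Z) 0 by
      simp [prod.comp_lift], Category.assoc, hs1, Category.comp_id]
  have sub_self : ∀ {T Z : C} (x : T ⟶ Z), prod.lift x x ≫ s Z = 0 := by
    intro T Z x
    rw [show prod.lift x x = x ≫ prod.lift (𝟙 Z) (𝟙 Z) by
      simp [prod.comp_lift], Category.assoc, hs2, comp_zero]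
  have neg_eq : ∀ {T Z : C} (x : T ⟶ Z),
      prod.lift 0 x ≫ s Z = x ≫ (prod.lift 0 (𝟙 Z) ≫ s Z) := by
    intro T Z x
    rw [← Category.assoc]
    congr 1
    apply Limits.prod.hom_ext <;> simp
  -- x - (x - y) = y, by jse'
  have C1 : ∀ Z : C, prod.lift prod.fst (s Z) ≫ s Z = prod.snd := by
    intro Z
    apply JointlyStrongEpi.jointEpi (js2 Z)
    · rw [← Category.assoc]
      have e : prod.lift (𝟙 Z) (0 : Z ⟶ Z) ≫ prod.lift prod.fst (s Z) =
          prod.lift (𝟙 Z) (𝟙 Z) := by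
        apply Limits.prod.hom_ext <;> simp [hs1]
      rw [e, hs2, prod.lift_snd]
    · rw [← Category.assoc]
      have e : prod.lift (𝟙 Z) (𝟙 Z) ≫ prod.lift prod.fst (s Z) =
          prod.lift (𝟙 Z) 0 := by
        apply Limits.prod.hom_ext <;> simp [hs2]
      rw [e, sub_zero, prod.lift_snd]
  -- negation is an involution
  have nn : ∀ Z : C, (prod.lift 0 (𝟙 Z) ≫ s Z) ≫ (prod.lift 0 (𝟙 Z) ≫ s Z) = 𝟙 Z := by
    intro Z
    have h := congrArg (fun t => prod.lift (0 : Z ⟶ Z) (𝟙 Z) ≫ t) (C1 Z)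
    rw [prod.lift_snd, ← Category.assoc] at h
    have e : prod.lift (0 : Z ⟶ Z) (𝟙 Z) ≫ prod.lift prod.fst (s Z) =
        prod.lift 0 (prod.lift 0 (𝟙 Z) ≫ s Z) := by
      apply Limits.prod.hom_ext <;> simp
    rw [e, neg_eq] at h
    exact h
  -- φ - snd∘l = fst∘k
  have star : prod.lift φ (prod.snd ≫ l) ≫ s A = prod.fst ≫ k := by
    apply JointlyStrongEpi.jointEpi js1
    · rw [← Category.assoc, ← Category.assoc]
      have e : prod.lift (𝟙 X) (0 : X ⟶ Y) ≫ prod.lift φ (prod.snd ≫ l) =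
          prod.lift k 0 := by
        apply Limits.prod.hom_ext <;> simp [hφ1]
      rw [e, sub_zero, prod.lift_fst, Category.id_comp]
    · rw [← Category.assoc, ← Category.assoc]
      have e : prod.lift (0 : Y ⟶ X) (𝟙 Y) ≫ prod.lift φ (prod.snd ≫ l) =
          prod.lift l l := by
        apply Limits.prod.hom_ext <;> simp [hφ2]
      rw [e, sub_self, prod.lift_fst, zero_comp]
  -- φ - fst∘k = snd∘l
  have star' : prod.lift φ (prod.fst ≫ k) ≫ s A = prod.snd ≫ l := by
    apply JointlyStrongEpi.jointEpi js1
    · rw [← Category.assoc, ← Category.assoc]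
      have e : prod.lift (𝟙 X) (0 : X ⟶ Y) ≫ prod.lift φ (prod.fst ≫ k) =
          prod.lift k k := by
        apply Limits.prod.hom_ext <;> simp [hφ1]
      rw [e, sub_self, prod.lift_snd, zero_comp]
    · rw [← Category.assoc, ← Category.assoc]
      have e : prod.lift (0 : Y ⟶ X) (𝟙 Y) ≫ prod.lift φ (prod.fst ≫ k) =
          prod.lift l 0 := by
        apply Limits.prod.hom_ext <;> simp [hφ2]
      rw [e, sub_zero, prod.lift_snd, Category.id_comp]
  -- the key identities for any morphism killed by φ
  have keyT : ∀ {T : C} (t : T ⟶ X ⨯ Y), t ≫ φ = 0 →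
      (t ≫ prod.fst) ≫ k = (prod.lift 0 (t ≫ prod.snd) ≫ s Y) ≫ l := by
    intro T t ht
    have e : t ≫ prod.lift φ (prod.snd ≫ l) = prod.lift 0 ((t ≫ prod.snd) ≫ l) := by
      apply Limits.prod.hom_ext <;> simp [ht]
    calc (t ≫ prod.fst) ≫ k = t ≫ prod.fst ≫ k := Category.assoc _ _ _
      _ = t ≫ prod.lift φ (prod.snd ≫ l) ≫ s A := by rw [star]
      _ = (t ≫ prod.lift φ (prod.snd ≫ l)) ≫ s A := (Category.assoc _ _ _).symm
      _ = prod.lift 0 ((t ≫ prod.snd) ≫ l) ≫ s A := by rw [e]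
      _ = (prod.lift 0 (t ≫ prod.snd) ≫ prod.map l l) ≫ s A := by
          rw [prod.lift_map, zero_comp]
      _ = prod.lift 0 (t ≫ prod.snd) ≫ s Y ≫ l := by rw [Category.assoc, hsnat]
      _ = (prod.lift 0 (t ≫ prod.snd) ≫ s Y) ≫ l := (Category.assoc _ _ _).symm
  have keyT' : ∀ {T : C} (t : T ⟶ X ⨯ Y), t ≫ φ = 0 →
      (t ≫ prod.snd) ≫ l = (prod.lift 0 (t ≫ prod.fst) ≫ s X) ≫ k := by
    intro T t ht
    have e : t ≫ prod.lift φ (prod.fst ≫ k) = prod.lift 0 ((t ≫ prod.fst) ≫ k) := by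
      apply Limits.prod.hom_ext <;> simp [ht]
    calc (t ≫ prod.snd) ≫ l = t ≫ prod.snd ≫ l := Category.assoc _ _ _
      _ = t ≫ prod.lift φ (prod.fst ≫ k) ≫ s A := by rw [star']
      _ = (t ≫ prod.lift φ (prod.fst ≫ k)) ≫ s A := (Category.assoc _ _ _).symm
      _ = prod.lift 0 ((t ≫ prod.fst) ≫ k) ≫ s A := by rw [e]
      _ = (prod.lift 0 (t ≫ prod.fst) ≫ prod.map k k) ≫ s A := by
          rw [prod.lift_map, zero_comp]
      _ = prod.lift 0 (t ≫ prod.fst) ≫ s X ≫ k := by rw [Category.assoc, hsnat]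
      _ = (prod.lift 0 (t ≫ prod.fst) ≫ s X) ≫ k := (Category.assoc _ _ _).symm
  -- w is a monomorphism (it is a kernel)
  have wext : ∀ {T : C} (a b : T ⟶ W), a ≫ w = b ≫ w → a = b := by
    intro T a b hab
    exact Fork.IsLimit.hom_ext hw (by simpa using hab)
  refine ⟨⟨?_⟩, ⟨?_⟩, ?_, ?_, keyT w hw0⟩
  · -- Mono (w ≫ prod.fst)
    intro T a b hab
    have habf : (a ≫ w) ≫ prod.fst = (b ≫ w) ≫ prod.fst := by
      simpa only [Category.assoc] using hab
    have ha := keyT' (a ≫ w) (by rw [Category.assoc, hw0, comp_zero])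
    have hb := keyT' (b ≫ w) (by rw [Category.assoc, hw0, comp_zero])
    have hsnd : (a ≫ w) ≫ prod.snd = (b ≫ w) ≫ prod.snd := by
      apply hl.right_cancellation
      rw [ha, hb, habf]
    exact wext a b (Limits.prod.hom_ext habf hsnd)
  · -- Mono (w ≫ prod.snd)
    intro T a b hab
    have habs : (a ≫ w) ≫ prod.snd = (b ≫ w) ≫ prod.snd := by
      simpa only [Category.assoc] using hab
    have ha := keyT (a ≫ w) (by rw [Category.assoc, hw0, comp_zero])
    have hb := keyT (b ≫ w) (by rw [Category.assoc, hw0, comp_zero])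
    have hfst : (a ≫ w) ≫ prod.fst = (b ≫ w) ≫ prod.fst := by
      apply hk.right_cancellation
      rw [ha, hb, habs]
    exact wext a b (Limits.prod.hom_ext hfst habs)
  · -- HuqCommute (w ≫ prod.fst) (𝟙 X)
    refine ⟨prod.lift prod.snd
        (prod.fst ≫ ((w ≫ prod.fst) ≫ (prod.lift 0 (𝟙 X) ≫ s X))) ≫ s X, ?_, ?_⟩
    · rw [← Category.assoc]
      have e : prod.lift (𝟙 W) (0 : W ⟶ X) ≫ prod.lift prod.snd
          (prod.fst ≫ ((w ≫ prod.fst) ≫ (prod.lift 0 (𝟙 X) ≫ s X))) =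
          prod.lift 0 ((w ≫ prod.fst) ≫ (prod.lift 0 (𝟙 X) ≫ s X)) := by
        apply Limits.prod.hom_ext <;> simp
      rw [e, neg_eq, Category.assoc, nn, Category.comp_id]
    · rw [← Category.assoc]
      have e : prod.lift (0 : X ⟶ W) (𝟙 X) ≫ prod.lift prod.snd
          (prod.fst ≫ ((w ≫ prod.fst) ≫ (prod.lift 0 (𝟙 X) ≫ s X))) =
          prod.lift (𝟙 X) 0 := by
        apply Limits.prod.hom_ext <;> simp
      rw [e, hs1]
  · -- HuqCommute (w ≫ prod.snd) (𝟙 Y)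
    refine ⟨prod.lift prod.snd
        (prod.fst ≫ ((w ≫ prod.snd) ≫ (prod.lift 0 (𝟙 Y) ≫ s Y))) ≫ s Y, ?_, ?_⟩
    · rw [← Category.assoc]
      have e : prod.lift (𝟙 W) (0 : W ⟶ Y) ≫ prod.lift prod.snd
          (prod.fst ≫ ((w ≫ prod.snd) ≫ (prod.lift 0 (𝟙 Y) ≫ s Y))) =
          prod.lift 0 ((w ≫ prod.snd) ≫ (prod.lift 0 (𝟙 Y) ≫ s Y)) := by
        apply Limits.prod.hom_ext <;> simp
      rw [e, neg_eq, Category.assoc, nn, Category.comp_id]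
    · rw [← Category.assoc]
      have e : prod.lift (0 : Y ⟶ W) (𝟙 Y) ≫ prod.lift prod.snd
          (prod.fst ≫ ((w ≫ prod.snd) ≫ (prod.lift 0 (𝟙 Y) ≫ s Y))) =
          prod.lift (𝟙 Y) 0 := by
        apply Limits.prod.hom_ext <;> simp
      rw [e, hs1]
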